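/- arXiv:1010.5117 — 2 statements merged into one kernel-verified Lean document; each statement's English description precedes it below -/
import Mathlib

section
/- Let A be a finite-dimensional semisimple complex algebra isomorphic to a product M_{n₁}(ℂ) × ... × M_{n_k}(ℂ), and let D be an additive derivation on A whose restriction to the center is zero. Then D is ℂ-linear and inner: there exists a ∈ A with D(x) = ax - xa for all x ∈ A. -/
section Aux

variable {k : ℕ} {n : Fin k → ℕ}

private lemma pi_single_mul_same (i : Fin k)
    (M N : Matrix (Fin (n i)) (Fin (n i)) ℂ) :
    (Pi.single i M : ∀ i, Matrix (Fin (n i)) (Fin (n i)) ℂ) * Pi.single i N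
      = Pi.single i (M * N) := by
  funext t
  by_cases h : t = i
  · subst h; simp [Pi.mul_apply]
  · simp [Pi.mul_apply, Pi.single_eq_of_ne h]

private lemma pi_single_mul_ne {i j : Fin k} (h : i ≠ j)
    (M : Matrix (Fin (n i)) (Fin (n i)) ℂ)
    (N : Matrix (Fin (n j)) (Fin (n j)) ℂ) :
    (Pi.single i M : ∀ i, Matrix (Fin (n i)) (Fin (n i)) ℂ) * Pi.single j N = 0 := by
  funext t
  by_cases hi : t = i
  · subst hi
    simp [Pi.mul_apply, Pi.single_eq_of_ne h]
  · simp [Pi.mul_apply, Pi.single_eq_of_ne hi]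

private lemma pi_single_finset_sum {β : Type*} (i : Fin k) (s : Finset β)
    (g : β → Matrix (Fin (n i)) (Fin (n i)) ℂ) :
    (Pi.single i (∑ x ∈ s, g x) : ∀ i, Matrix (Fin (n i)) (Fin (n i)) ℂ)
      = ∑ x ∈ s, Pi.single i (g x) :=
  map_sum (AddMonoidHom.single (fun i => Matrix (Fin (n i)) (Fin (n i)) ℂ) i) g s

private lemma diag_sum_eq_one (m : ℕ) :
    (∑ p : Fin m, Matrix.single p p (1 : ℂ)) = 1 := by
  ext u v
  simp only [Matrix.sum_apply, Matrix.single, Matrix.of_apply, Matrix.one_apply]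
  rw [Finset.sum_eq_single u]
  · simp
  · intro p _ hp
    simp [hp]
  · simp

end Aux

theorem derivation_zero_on_center_is_inner
    (k : ℕ) (n : Fin k → ℕ)
    (D : (∀ i, Matrix (Fin (n i)) (Fin (n i)) ℂ) → (∀ i, Matrix (Fin (n i)) (Fin (n i)) ℂ))
    (hadd : ∀ x y, D (x + y) = D x + D y)
    (hleib : ∀ x y, D (x * y) = D x * y + x * D y)
    (hcenter : ∀ z ∈ Set.center (∀ i, Matrix (Fin (n i)) (Fin (n i)) ℂ), D z = 0) :
    (∀ (lam : ℂ) x, D (lam • x) = lam • D x) ∧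
    ∃ a, ∀ x, D x = a * x - x * a := by
  -- D is homogeneous
  have hsmul : ∀ (lam : ℂ) x, D (lam • x) = lam • D x := by
    intro lam x
    set z : ∀ i, Matrix (Fin (n i)) (Fin (n i)) ℂ :=
      fun i => lam • (1 : Matrix (Fin (n i)) (Fin (n i)) ℂ) with hz
    have hzc : z ∈ Set.center (∀ i, Matrix (Fin (n i)) (Fin (n i)) ℂ) := by
      rw [Semigroup.mem_center_iff]
      intro g
      funext i
      show g i * (lam • 1) = (lam • 1) * g i
      rw [mul_smul_comm, smul_mul_assoc, mul_one, one_mul]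
    have hzx : ∀ y : ∀ i, Matrix (Fin (n i)) (Fin (n i)) ℂ, z * y = lam • y := by
      intro y
      funext i
      show (lam • 1) * y i = lam • y i
      rw [smul_mul_assoc, one_mul]
    calc D (lam • x) = D (z * x) := by rw [hzx]
      _ = D z * x + z * D x := hleib z x
      _ = z * D x := by rw [hcenter z hzc, zero_mul, zero_add]
      _ = lam • D x := hzx _
  refine ⟨hsmul, ?_⟩
  -- package D as a linear map
  let Dl : (∀ i, Matrix (Fin (n i)) (Fin (n i)) ℂ) →ₗ[ℂ] (∀ i, Matrix (Fin (n i)) (Fin (n i)) ℂ) :=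
    { toFun := D, map_add' := hadd, map_smul' := fun c x => hsmul c x }
  have hDl : ∀ x, D x = Dl x := fun _ => rfl
  -- matrix units
  let E : (i : Fin k) → Fin (n i) → Fin (n i) → ∀ i, Matrix (Fin (n i)) (Fin (n i)) ℂ :=
    fun i u v => Pi.single i (Matrix.single u v (1 : ℂ))
  let z0 : {i : Fin k} → Fin (n i) → Fin (n i) :=
    fun {i} u => ⟨0, lt_of_le_of_lt (Nat.zero_le u.1) u.2⟩
  have hEE : ∀ (i : Fin k) (u v w : Fin (n i)), E i u v * E i v w = E i u w := by
    intro i u v w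
    rw [pi_single_mul_same]
    simp [E]
  have hEE0 : ∀ (i : Fin k) (u v p q : Fin (n i)), v ≠ p → E i u v * E i p q = 0 := by
    intro i u v p q h
    rw [pi_single_mul_same, Matrix.single_mul_single_of_ne (c := (1 : ℂ)) (d := (1 : ℂ)) (h := h),
      Pi.single_zero]
  -- the candidate inner element
  set a : ∀ i, Matrix (Fin (n i)) (Fin (n i)) ℂ :=
    ∑ j, ∑ p : Fin (n j), D (E j p (z0 p)) * E j (z0 p) p with ha
  set b : ∀ i, Matrix (Fin (n i)) (Fin (n i)) ℂ :=
    ∑ j, ∑ p : Fin (n j), E j p (z0 p) * D (E j (z0 p) p) with hb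
  have hone : (1 : ∀ i, Matrix (Fin (n i)) (Fin (n i)) ℂ)
      = ∑ j, ∑ p : Fin (n j), E j p p := by
    have h1 : ∀ j : Fin k, (∑ p : Fin (n j), E j p p)
        = Pi.single j (1 : Matrix (Fin (n j)) (Fin (n j)) ℂ) := by
      intro j
      rw [← diag_sum_eq_one (n j), pi_single_finset_sum]
    simp only [h1]
    exact (Finset.univ_sum_single (1 : ∀ i, Matrix (Fin (n i)) (Fin (n i)) ℂ)).symm
  have hD1 : D (1 : ∀ i, Matrix (Fin (n i)) (Fin (n i)) ℂ) = 0 := hcenter 1 (by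
    rw [Semigroup.mem_center_iff]; intro g; rw [mul_one, one_mul])
  have hab : a + b = 0 := by
    rw [ha, hb, ← Finset.sum_add_distrib]
    have h2 : ∀ j : Fin k,
        ((∑ p : Fin (n j), D (E j p (z0 p)) * E j (z0 p) p)
          + ∑ p : Fin (n j), E j p (z0 p) * D (E j (z0 p) p))
        = ∑ p : Fin (n j), D (E j p p) := by
      intro j
      rw [← Finset.sum_add_distrib]
      refine Finset.sum_congr rfl fun p _ => ?_
      rw [← hleib, hEE]
    simp only [h2]
    calc (∑ j, ∑ p : Fin (n j), D (E j p p))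
        = Dl (∑ j, ∑ p : Fin (n j), E j p p) := by
          rw [map_sum]; exact Finset.sum_congr rfl fun j _ => (map_sum Dl _ _).symm
      _ = D 1 := by rw [← hone]; exact (hDl 1).symm
      _ = 0 := hD1
  have haE : ∀ (j : Fin k) (u v : Fin (n j)),
      a * E j u v = D (E j u (z0 u)) * E j (z0 u) v := by
    intro j u v
    rw [ha, Finset.sum_mul]
    rw [Finset.sum_eq_single j]
    · rw [Finset.sum_mul, Finset.sum_eq_single u]
      · rw [mul_assoc, hEE]
      · intro p _ hp
        rw [mul_assoc, hEE0 j (z0 p) p u v hp, mul_zero]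
      · simp
    · intro j' _ hj'
      rw [Finset.sum_mul]
      refine Finset.sum_eq_zero fun p _ => ?_
      rw [mul_assoc, pi_single_mul_ne hj', mul_zero]
    · simp
  have hEa : ∀ (j : Fin k) (u v : Fin (n j)),
      E j u v * a = - (E j u (z0 u) * D (E j (z0 u) v)) := by
    intro j u v
    have hab' : a = -b := eq_neg_of_add_eq_zero_left hab
    rw [hab', mul_neg, neg_inj, hb, Finset.mul_sum]
    rw [Finset.sum_eq_single j]
    · rw [Finset.mul_sum, Finset.sum_eq_single v]
      · rw [← mul_assoc, hEE]
      · intro p _ hp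
        rw [← mul_assoc, hEE0 j u v p (z0 p) (Ne.symm hp), zero_mul]
      · simp
    · intro j' _ hj'
      rw [Finset.mul_sum]
      refine Finset.sum_eq_zero fun p _ => ?_
      rw [← mul_assoc, pi_single_mul_ne (Ne.symm hj'), zero_mul]
    · simp
  have key : ∀ (j : Fin k) (u v : Fin (n j)),
      D (E j u v) = a * E j u v - E j u v * a := by
    intro j u v
    rw [haE, hEa, sub_neg_eq_add]
    have h3 : E j u v = E j u (z0 u) * E j (z0 u) v := (hEE j u (z0 u) v).symm
    rw [h3, hleib]
  refine ⟨a, fun x => ?_⟩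
  have hx : x = ∑ j, ∑ u, ∑ v, x j u v • E j u v := by
    have h4 : ∀ j : Fin k, (∑ u, ∑ v, x j u v • E j u v) = Pi.single j (x j) := by
      intro j
      have hxj := Matrix.matrix_eq_sum_single (x j)
      calc (∑ u, ∑ v, x j u v • E j u v)
          = Pi.single j (∑ u, ∑ v, Matrix.single u v (x j u v)) := by
            rw [pi_single_finset_sum]
            refine Finset.sum_congr rfl fun u _ => ?_
            rw [pi_single_finset_sum]
            refine Finset.sum_congr rfl fun v _ => ?_
            rw [← Pi.single_smul, Matrix.smul_single, smul_eq_mul, mul_one]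
        _ = Pi.single j (x j) := by rw [← hxj]
    simp only [h4]
    exact (Finset.univ_sum_single x).symm
  calc D x = Dl (∑ j, ∑ u, ∑ v, x j u v • E j u v) := by rw [hDl, ← hx]
    _ = ∑ j, ∑ u, ∑ v, x j u v • D (E j u v) := by
        rw [map_sum]
        refine Finset.sum_congr rfl fun j _ => ?_
        rw [map_sum]
        refine Finset.sum_congr rfl fun u _ => ?_
        rw [map_sum]
        exact Finset.sum_congr rfl fun v _ => map_smul Dl _ _
    _ = ∑ j, ∑ u, ∑ v, x j u v • (a * E j u v - E j u v * a) := by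
        simp only [key]
    _ = a * x - x * a := by
        conv_rhs => rw [hx]
        simp only [Finset.mul_sum, Finset.sum_mul, ← Finset.sum_sub_distrib,
          smul_sub, mul_smul_comm, smul_mul_assoc]
end

section
/- Every additive derivation D on Mₙ(ℂ) decomposes uniquely as D = D_a + D_δ, where D_a(x) = ax - xa is inner (a ∈ Mₙ(ℂ) with trace zero, say, for uniqueness up to center) and D_δ is the entrywise application of an additive derivation δ : ℂ → ℂ. Uniqueness: if D_a + D_δ = D_{a'} + D_{δ'} with a, a' ∈ Mₙ(ℂ) and δ, δ' additive derivations on ℂ, then δ = δ' and a - a' is a scalar matrix. -/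
/-- Entrywise application of a map `δ : ℂ → ℂ` to a matrix. -/
def entrywise {n : ℕ} (δ : ℂ → ℂ) (x : Matrix (Fin n) (Fin n) ℂ) :
    Matrix (Fin n) (Fin n) ℂ :=
  Matrix.of fun i j => δ (x i j)

open Matrix in
lemma aux_corner {n : ℕ} (z : Fin n) (M : Matrix (Fin n) (Fin n) ℂ) :
    single z z (1:ℂ) * M * single z z (1:ℂ) = single z z (M z z) := by
  ext i j
  by_cases hi : i = z <;> by_cases hj : j = z
  · subst hi hj; simp
  · subst hi
    rw [Matrix.mul_single_apply_of_ne (hbj := hj)]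
    exact (Matrix.single_apply_of_ne _ _ _ _ _ (by tauto)).symm
  · subst hj
    rw [Matrix.mul_single_apply_same,
      Matrix.single_mul_apply_of_ne (h := hi), zero_mul]
    exact (Matrix.single_apply_of_ne _ _ _ _ _ (by tauto)).symm
  · rw [Matrix.mul_single_apply_of_ne (hbj := hj)]
    exact (Matrix.single_apply_of_ne _ _ _ _ _ (by tauto)).symm

open Matrix in
lemma aux_sum_diag {n : ℕ} :
    ∑ k : Fin n, single k k (1:ℂ) = 1 := by
  ext i j
  rw [Matrix.sum_apply]
  by_cases h : i = j
  · subst h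
    rw [Finset.sum_eq_single i (fun b _ hb => by simp [hb]) (by simp)]
    simp [Matrix.one_apply]
  · rw [Matrix.one_apply_ne h]
    exact Finset.sum_eq_zero fun k _ =>
      Matrix.single_apply_of_ne _ _ _ _ _ (by rintro ⟨rfl, rfl⟩; exact h rfl)

theorem additive_derivation_decomposition_matrix
    (n : ℕ) (hn : 0 < n)
    (D : Matrix (Fin n) (Fin n) ℂ → Matrix (Fin n) (Fin n) ℂ)
    (hadd : ∀ x y, D (x + y) = D x + D y)
    (hleib : ∀ x y, D (x * y) = D x * y + x * D y) :
    (∃ (a : Matrix (Fin n) (Fin n) ℂ) (δ : ℂ → ℂ),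
      (∀ x y : ℂ, δ (x + y) = δ x + δ y) ∧
      (∀ x y : ℂ, δ (x * y) = δ x * y + x * δ y) ∧
      ∀ x, D x = (a * x - x * a) + entrywise δ x) ∧
    (∀ (a a' : Matrix (Fin n) (Fin n) ℂ) (δ δ' : ℂ → ℂ),
      (∀ x y : ℂ, δ (x + y) = δ x + δ y) →
      (∀ x y : ℂ, δ (x * y) = δ x * y + x * δ y) →
      (∀ x y : ℂ, δ' (x + y) = δ' x + δ' y) →
      (∀ x y : ℂ, δ' (x * y) = δ' x * y + x * δ' y) →
      (∀ x, (a * x - x * a) + entrywise δ x = (a' * x - x * a') + entrywise δ' x) →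
      δ = δ' ∧ ∃ lam : ℂ, a - a' = lam • (1 : Matrix (Fin n) (Fin n) ℂ)) := by
  constructor
  · -- existence
    set z : Fin n := ⟨0, hn⟩ with hz
    set E : Fin n → Fin n → Matrix (Fin n) (Fin n) ℂ :=
      fun i j => Matrix.single i j (1:ℂ) with hE
    have hD0 : D 0 = 0 := by
      have h := hadd 0 0
      rw [add_zero] at h
      exact (left_eq_add.mp h)
    set b : Matrix (Fin n) (Fin n) ℂ := ∑ k, D (E k z) * E z k with hb
    set D' : Matrix (Fin n) (Fin n) ℂ → Matrix (Fin n) (Fin n) ℂ :=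
      fun x => D x - (b * x - x * b) with hD'
    have hadd' : ∀ x y, D' (x + y) = D' x + D' y := by
      intro x y
      simp only [hD', hadd]
      noncomm_ring
    have hleib' : ∀ x y, D' (x * y) = D' x * y + x * D' y := by
      intro x y
      simp only [hD', hleib]
      noncomm_ring
    have hD'0 : D' 0 = 0 := by simp [hD', hD0]
    -- D' kills matrix units
    have hunit : ∀ i j, D' (E i j) = 0 := by
      intro i j
      have h1 : b * E i j = D (E i z) * E z j := by
        rw [hb, Finset.sum_mul]
        rw [Finset.sum_eq_single i ?_ (by simp)]
        · rw [mul_assoc]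
          simp only [hE]
          simp
        · intro k _ hk
          rw [mul_assoc]
          simp only [hE]
          rw [Matrix.single_mul_single_of_ne (h := hk), mul_zero]
      have h2 : ∀ k : Fin n, E i j * D (E k z) =
          (if j = k then D (E i z) else 0) - D (E i j) * E k z := by
        intro k
        have hl := hleib (E i j) (E k z)
        have hm : E i j * E k z = if j = k then E i z else 0 := by
          by_cases h : j = k
          · subst h; simp only [hE]; simp
          · simp only [hE, if_neg h]
            rw [Matrix.single_mul_single_of_ne (h := h)]
        rw [hm] at hl
        by_cases h : j = k
        · rw [if_pos h] at hl ⊢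
          rw [eq_sub_iff_add_eq, add_comm]
          exact hl.symm
        · rw [if_neg h] at hl ⊢
          rw [hD0] at hl
          rw [eq_sub_iff_add_eq, add_comm]
          exact hl.symm
      have h3 : E i j * b = D (E i z) * E z j - D (E i j) := by
        rw [hb, Finset.mul_sum]
        have key : ∀ k : Fin n, E i j * (D (E k z) * E z k) =
            (if j = k then D (E i z) * E z j else 0) - D (E i j) * (E k z * E z k) := by
          intro k
          rw [← mul_assoc, h2 k, sub_mul, mul_assoc]
          congr 1
          by_cases h : j = k
          · subst h; simp only [hE]; simp
          · rw [if_neg h, if_neg h, zero_mul]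
        rw [Finset.sum_congr rfl (fun k _ => key k), Finset.sum_sub_distrib]
        congr 1
        · rw [Finset.sum_ite_eq (Finset.univ : Finset (Fin n)) j
            (fun _ => D (E i z) * E z j)]
          simp
        · rw [← Finset.mul_sum]
          have hsum : ∀ k : Fin n, E k z * E z k = Matrix.single k k (1:ℂ) := by
            intro k; simp only [hE]; simp
          rw [Finset.sum_congr rfl (fun k _ => hsum k), aux_sum_diag, mul_one]
      simp only [hD']
      rw [h1, h3]
      abel
    -- the scalar derivation
    set δ : ℂ → ℂ := fun c => D' (Matrix.single z z c) z z with hδ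
    have hScorner : ∀ c : ℂ, D' (Matrix.single z z c) =
        Matrix.single z z (δ c) := by
      intro c
      have hfac : Matrix.single z z c =
          E z z * Matrix.single z z c * E z z := by
        simp only [hE]
        rw [aux_corner, Matrix.single_apply_same]
      calc D' (Matrix.single z z c)
          = D' (E z z * Matrix.single z z c * E z z) := by rw [← hfac]
        _ = E z z * D' (Matrix.single z z c) * E z z := by
            rw [hleib', hleib', hunit]
            noncomm_ring
        _ = Matrix.single z z (δ c) := by
            simp only [hE]
            rw [aux_corner]
    have hDstd : ∀ (i j : Fin n) (c : ℂ),
        D' (Matrix.single i j c) = Matrix.single i j (δ c) := by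
      intro i j c
      have hfac : Matrix.single i j c =
          E i z * Matrix.single z z c * E z j := by
        simp only [hE]; simp
      rw [hfac, hleib', hleib', hunit, hunit, hScorner]
      simp only [hE]
      simp
    have hδadd : ∀ x y : ℂ, δ (x + y) = δ x + δ y := by
      intro x y
      have hst : Matrix.single z z (x + y) =
          Matrix.single z z x + Matrix.single z z y :=
        Matrix.single_add z z x y
      simp only [hδ, hst, hadd', Matrix.add_apply]
    have hδleib : ∀ x y : ℂ, δ (x * y) = δ x * y + x * δ y := by
      intro x y
      have hfac : Matrix.single z z (x * y) =
          Matrix.single z z x * Matrix.single z z y := by simp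
      have hkey : D' (Matrix.single z z (x*y)) =
          Matrix.single z z (δ x) * Matrix.single z z y +
          Matrix.single z z x * Matrix.single z z (δ y) := by
        rw [hfac, hleib', hScorner x, hScorner y]
      have := congrArg (fun M => M z z) hkey
      simp only [Matrix.add_apply] at this
      simp only [hδ]
      simpa using this
    -- D' is entrywise δ
    have hmain : ∀ x, D' x = entrywise δ x := by
      intro x
      let F : Matrix (Fin n) (Fin n) ℂ →+ Matrix (Fin n) (Fin n) ℂ :=
        AddMonoidHom.mk' D' hadd'
      have hFx : D' x = F x := rfl
      rw [hFx]
      conv_lhs => rw [Matrix.matrix_eq_sum_single x]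
      rw [map_sum]
      have hrow : ∀ i : Fin n, F (∑ j, Matrix.single i j (x i j)) =
          ∑ j, Matrix.single i j (δ (x i j)) := by
        intro i
        rw [map_sum]
        exact Finset.sum_congr rfl fun j _ => hDstd i j (x i j)
      rw [Finset.sum_congr rfl fun i _ => hrow i]
      have he : entrywise δ x = ∑ i, ∑ j, Matrix.single i j (δ (x i j)) := by
        conv_lhs => rw [Matrix.matrix_eq_sum_single (entrywise δ x)]
        rfl
      rw [he]
    refine ⟨b, δ, hδadd, hδleib, fun x => ?_⟩
    have h := hmain x
    simp only [hD'] at h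
    rw [sub_eq_iff_eq_add] at h
    rw [h]
    abel
  · -- uniqueness
    intro a a' δ δ' hδa hδl hδ'a hδ'l heq
    have hδeq : δ = δ' := by
      funext c
      have h := heq (c • 1)
      have hc1 : a * (c • (1:Matrix (Fin n) (Fin n) ℂ)) - (c • 1) * a = 0 := by
        simp [mul_smul_comm, smul_mul_assoc]
      have hc2 : a' * (c • (1:Matrix (Fin n) (Fin n) ℂ)) - (c • 1) * a' = 0 := by
        simp [mul_smul_comm, smul_mul_assoc]
      rw [hc1, hc2, zero_add, zero_add] at h
      have h00 := congrArg (fun M => M ⟨0, hn⟩ ⟨0, hn⟩) h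
      simpa [entrywise, Matrix.one_apply] using h00
    refine ⟨hδeq, ?_⟩
    subst hδeq
    have hcomm : ∀ x, (a - a') * x = x * (a - a') := by
      intro x
      have h := heq x
      have h2 : a * x - x * a = a' * x - x * a' := add_right_cancel h
      rw [sub_mul, mul_sub]
      exact sub_eq_sub_iff_sub_eq_sub.mp h2
    refine ⟨(a - a') ⟨0, hn⟩ ⟨0, hn⟩, ?_⟩
    ext i j
    by_cases h : i = j
    · subst h
      have hd := congrArg (fun M => M i (⟨0, hn⟩ : Fin n))
        (hcomm (Matrix.single i (⟨0, hn⟩ : Fin n) (1:ℂ)))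
      simp at hd
      simp [Matrix.one_apply, hd]
    · have hij := congrArg (fun M => M i j)
        (hcomm (Matrix.single j j (1:ℂ)))
      simp [h] at hij
      simp [Matrix.one_apply, h, hij]
end
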